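/- Let y, z : [t0, T] → ℝ≥0 be continuous with y(t0) ≤ κ/4, κ > 0, and suppose y is absolutely continuous with y'(t) + z(t)(κ/2 - y(t)) ≤ 0 for a.e. t. Then y(t) ≤ κ/4 for all t ∈ [t0, T]; in particular y is non-increasing on [t0, T]. -/

import Mathlib

open MeasureTheory

/-- Goldowski–Tonelli: an everywhere differentiable function on `[a, b]` whose
derivative is nonpositive a.e. is antitone. -/
theorem antitoneOn_of_hasDerivWithinAt_ae_nonpos {f f' : ℝ → ℝ} {a b : ℝ}
    (hcont : ContinuousOn f (Set.Icc a b))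
    (hderiv : ∀ x ∈ Set.Icc a b, HasDerivWithinAt f (f' x) (Set.Icc a b) x)
    (hae : ∀ᵐ x ∂(volume.restrict (Set.Icc a b)), f' x ≤ 0) :
    AntitoneOn f (Set.Icc a b) := by
  intro u hu v hv huv
  by_contra hlt
  push_neg at hlt
  have huv' : u < v :=
    huv.lt_of_ne (fun h => by rw [h] at hlt; exact lt_irrefl _ hlt)
  -- the bad set where the a.e. inequality fails is null
  have hbad : volume ({x | ¬ f' x ≤ 0} ∩ Set.Icc a b) = 0 := by
    have h := ae_iff.mp hae
    rwa [Measure.restrict_apply' measurableSet_Icc] at h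
  set N : Set ℝ := toMeasurable volume ({x | ¬ f' x ≤ 0} ∩ Set.Icc a b) with hN
  have hNmeas : MeasurableSet N := measurableSet_toMeasurable _ _
  have hNnull : volume N = 0 := by
    rw [hN, measure_toMeasurable]; exact hbad
  have hsubN : {x | ¬ f' x ≤ 0} ∩ Set.Icc a b ⊆ N := subset_toMeasurable _ _
  -- at interior points `f'` is the honest derivative
  have hIoosub : Set.Ioo u v ⊆ Set.Ioo a b :=
    Set.Ioo_subset_Ioo hu.1 hv.2
  have hD : ∀ x ∈ Set.Ioo a b, HasDerivAt f (f' x) x := fun x hx =>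
    (hderiv x (Set.Ioo_subset_Icc_self hx)).hasDerivAt (Icc_mem_nhds hx.1 hx.2)
  -- the set of points in `(u, v)` where the derivative could be nonnegative
  set S : Set ℝ := (Set.Ioo u v ∩ (deriv f) ⁻¹' {0}) ∪ (Set.Ioo u v ∩ N) with hS
  have hSsub : S ⊆ Set.Ioo u v := by
    rw [hS]
    intro x hx
    rcases hx with hx | hx
    · exact hx.1
    · exact hx.1
  have hSmeas : MeasurableSet S := by
    apply MeasurableSet.union
    · exact measurableSet_Ioo.inter ((measurable_deriv f) (measurableSet_singleton 0))
    · exact measurableSet_Ioo.inter hNmeas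
  have hSd : ∀ x ∈ S, HasFDerivWithinAt f
      ((1 : ℝ →L[ℝ] ℝ).smulRight (f' x)) S x := fun x hx =>
    ((hD x (hIoosub (hSsub hx))).hasFDerivAt).hasFDerivWithinAt
  -- the image of `S` is null
  have himg : volume (f '' S) = 0 := by
    have h1 := addHaar_image_le_lintegral_abs_det_fderiv volume hSmeas hSd
    have h2 : (∫⁻ x in S, ENNReal.ofReal
        |(((1 : ℝ →L[ℝ] ℝ).smulRight (f' x)).det)| ∂volume) = 0 := by
      have hle : (∫⁻ x in S, ENNReal.ofReal
          |(((1 : ℝ →L[ℝ] ℝ).smulRight (f' x)).det)| ∂volume) ≤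
          (∫⁻ x in Set.Ioo u v ∩ (deriv f) ⁻¹' {0}, ENNReal.ofReal
            |(((1 : ℝ →L[ℝ] ℝ).smulRight (f' x)).det)| ∂volume) +
          (∫⁻ x in Set.Ioo u v ∩ N, ENNReal.ofReal
            |(((1 : ℝ →L[ℝ] ℝ).smulRight (f' x)).det)| ∂volume) := by
        rw [hS]
        exact lintegral_union_le _ _ _
      have hz1 : (∫⁻ x in Set.Ioo u v ∩ (deriv f) ⁻¹' {0}, ENNReal.ofReal
          |(((1 : ℝ →L[ℝ] ℝ).smulRight (f' x)).det)| ∂volume) = 0 := by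
        rw [← lintegral_zero (μ := volume.restrict (Set.Ioo u v ∩ (deriv f) ⁻¹' {0}))]
        apply setLIntegral_congr_fun
          (measurableSet_Ioo.inter ((measurable_deriv f) (measurableSet_singleton 0)))
        intro x hx
        beta_reduce
        have hx0 : deriv f x = 0 := hx.2
        have hfx : f' x = deriv f x := ((hD x (hIoosub hx.1)).deriv).symm
        rw [ContinuousLinearMap.det_smulRight, hfx, hx0]
        simp
      have hz2 : (∫⁻ x in Set.Ioo u v ∩ N, ENNReal.ofReal
          |(((1 : ℝ →L[ℝ] ℝ).smulRight (f' x)).det)| ∂volume) = 0 :=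
        setLIntegral_measure_zero _ _
          (measure_mono_null Set.inter_subset_right hNnull)
      rw [hz1, hz2] at hle
      simpa using hle
    rw [h2] at h1
    exact le_antisymm h1 zero_le
  -- pick a regular value `c` in `(f u, f v)` avoiding `f '' S`
  obtain ⟨c, hc, hcS⟩ : ∃ c ∈ Set.Ioo (f u) (f v), c ∉ f '' S := by
    by_contra h
    push_neg at h
    have hsub : Set.Ioo (f u) (f v) ⊆ f '' S := fun c hc => h c hc
    have := measure_mono (μ := volume) hsub
    rw [himg, Real.volume_Ioo] at this
    have h0 : ENNReal.ofReal (f v - f u) = 0 := le_antisymm this zero_le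
    rw [ENNReal.ofReal_eq_zero] at h0
    linarith
  -- the last point where `f = c` on `[u, v]`
  set K : Set ℝ := Set.Icc u v ∩ f ⁻¹' {c} with hK
  have hcontuv : ContinuousOn f (Set.Icc u v) :=
    hcont.mono (Set.Icc_subset_Icc hu.1 hv.2)
  have hKclosed : IsClosed K :=
    hcontuv.preimage_isClosed_of_isClosed isClosed_Icc isClosed_singleton
  have hKne : K.Nonempty := by
    have hcin : c ∈ Set.Icc (f u) (f v) := Set.Ioo_subset_Icc_self hc
    obtain ⟨x, hx, hfx⟩ := intermediate_value_Icc huv'.le hcontuv hcin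
    exact ⟨x, hx, hfx⟩
  have hKbdd : BddAbove K := ⟨v, fun x hx => hx.1.2⟩
  set w : ℝ := sSup K with hw
  have hwK : w ∈ K := hKclosed.csSup_mem hKne hKbdd
  have hfw : f w = c := hwK.2
  have hwuv : w ∈ Set.Icc u v := hwK.1
  have hwltv : w < v := by
    rcases lt_or_eq_of_le hwuv.2 with h | h
    · exact h
    · exfalso; rw [h] at hfw; rw [hfw] at hc; exact lt_irrefl _ hc.2
  have hultw : u < w := by
    rcases lt_or_eq_of_le hwuv.1 with h | h
    · exact h
    · exfalso; rw [← h] at hfw; rw [hfw] at hc; exact lt_irrefl _ hc.1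
  have hwIoo : w ∈ Set.Ioo u v := ⟨hultw, hwltv⟩
  -- to the right of `w`, `f > c`
  have hright : ∀ x ∈ Set.Ioc w v, c < f x := by
    intro x hx
    by_contra hle
    push_neg at hle
    have hcin : c ∈ Set.Icc (f x) (f v) := ⟨hle, hc.2.le⟩
    obtain ⟨x', hx', hfx'⟩ := intermediate_value_Icc hx.2
      (hcontuv.mono (Set.Icc_subset_Icc (hultw.le.trans hx.1.le) le_rfl)) hcin
    have hx'K : x' ∈ K := ⟨⟨(hultw.le.trans hx.1.le).trans hx'.1, hx'.2⟩, hfx'⟩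
    have : x' ≤ w := le_csSup hKbdd hx'K
    have : w < x' := lt_of_lt_of_le hx.1 hx'.1
    linarith
  -- so the derivative at `w` is nonnegative
  have hderw : 0 ≤ f' w := by
    have hwab : w ∈ Set.Icc a b := ⟨hu.1.trans hwuv.1, hwuv.2.trans hv.2⟩
    have hIocsub : Set.Ioc w v ⊆ Set.Icc a b := fun x hx =>
      ⟨hwab.1.trans hx.1.le, hx.2.trans hv.2⟩
    have hd : HasDerivWithinAt f (f' w) (Set.Ioc w v) w :=
      (hderiv w hwab).mono hIocsub
    have hslope : Filter.Tendsto (slope f w) (nhdsWithin w (Set.Ioc w v \ {w}))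
        (nhds (f' w)) := hasDerivWithinAt_iff_tendsto_slope.mp hd
    have hdiff : Set.Ioc w v \ {w} = Set.Ioc w v := by
      ext x; simp only [Set.mem_diff, Set.mem_singleton_iff, Set.mem_Ioc]
      constructor
      · exact fun h => h.1
      · exact fun h => ⟨h, ne_of_gt h.1⟩
    rw [hdiff, nhdsWithin_Ioc_eq_nhdsGT hwltv] at hslope
    refine ge_of_tendsto hslope ?_
    filter_upwards [Ioc_mem_nhdsGT hwltv] with x hx
    have hcx : c < f x := hright x hx
    have : 0 < f x - f w := by rw [hfw]; linarith
    have hxw : 0 < x - w := sub_pos.mpr hx.1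
    rw [slope_def_field]
    exact div_nonneg this.le hxw.le
  -- hence `w ∈ S`, contradicting `c ∉ f '' S`
  have hwS : w ∈ S := by
    by_cases hN' : w ∈ N
    · exact Or.inr ⟨hwIoo, hN'⟩
    · have hfle : f' w ≤ 0 := by
        by_contra hpos
        exact hN' (hsubN ⟨hpos, ⟨hu.1.trans hwuv.1, hwuv.2.trans hv.2⟩⟩)
      have hzero : f' w = 0 := le_antisymm hfle hderw
      have : deriv f w = 0 := by
        rw [(hD w (hIoosub hwIoo)).deriv]; exact hzero
      exact Or.inl ⟨hwIoo, this⟩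
  exact hcS ⟨w, hwS, hfw⟩

/-- If nonnegative continuous `y, z` on `[t0, T]` satisfy `y(t0) ≤ κ/4` and
`y'(t) + z(t)(κ/2 - y(t)) ≤ 0` a.e., then `y(t) ≤ κ/4` on `[t0, T]` and `y`
is non-increasing there. -/
theorem differential_inequality_stays_small (y y' z : ℝ → ℝ) (t0 T κ : ℝ)
    (hκ : 0 < κ) (hT : t0 ≤ T)
    (hy_cont : ContinuousOn y (Set.Icc t0 T))
    (hz_cont : ContinuousOn z (Set.Icc t0 T))
    (hy_nonneg : ∀ t ∈ Set.Icc t0 T, 0 ≤ y t)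
    (hz_nonneg : ∀ t ∈ Set.Icc t0 T, 0 ≤ z t)
    (hderiv : ∀ t ∈ Set.Icc t0 T, HasDerivWithinAt y (y' t) (Set.Icc t0 T) t)
    (hy0 : y t0 ≤ κ / 4)
    (hineq : ∀ᵐ t ∂(volume.restrict (Set.Icc t0 T)),
      y' t + z t * (κ / 2 - y t) ≤ 0) :
    (∀ t ∈ Set.Icc t0 T, y t ≤ κ / 4) ∧ AntitoneOn y (Set.Icc t0 T) := by
  -- Step 1: `y < κ/2` everywhere on `[t0, T]`.
  have hlt : ∀ t ∈ Set.Icc t0 T, y t < κ / 2 := by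
    by_contra h
    push_neg at h
    obtain ⟨t1', ht1', hy1'⟩ := h
    set W : Set ℝ := Set.Icc t0 T ∩ y ⁻¹' Set.Ici (κ / 2) with hW
    have hWclosed : IsClosed W :=
      hy_cont.preimage_isClosed_of_isClosed isClosed_Icc isClosed_Ici
    have hWne : W.Nonempty := ⟨t1', ht1', hy1'⟩
    have hWbdd : BddBelow W := ⟨t0, fun x hx => hx.1.1⟩
    set t1 : ℝ := sInf W with ht1
    have ht1W : t1 ∈ W := hWclosed.csInf_mem hWne hWbdd
    have ht1Icc : t1 ∈ Set.Icc t0 T := ht1W.1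
    have hyt1 : κ / 2 ≤ y t1 := ht1W.2
    -- below `t1`, `y < κ/2`
    have hbelow : ∀ s ∈ Set.Ico t0 t1, y s < κ / 2 := by
      intro s hs
      by_contra hge
      push_neg at hge
      have hsW : s ∈ W := ⟨⟨hs.1, hs.2.le.trans ht1Icc.2⟩, hge⟩
      exact absurd (csInf_le hWbdd hsW) (not_le.mpr hs.2)
    have hle : ∀ s ∈ Set.Icc t0 t1, y s ≤ κ / 2 := by
      intro s hs
      rcases lt_or_eq_of_le hs.2 with h | h
      · exact (hbelow s ⟨hs.1, h⟩).le
      · rcases lt_or_ge (y s) (κ / 2) with h' | h'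
        · exact h'.le
        · -- s = t1, y s ≥ κ/2; need `≤`: show y t1 = κ/2? Just use continuity below.
          subst h
          rcases eq_or_lt_of_le ht1Icc.1 with heq | hlt0
          · exfalso
            rw [← heq] at h'
            linarith
          · -- t1 > t0 : y t1 = lim of y s for s < t1, each < κ/2
            have hcont1 : ContinuousWithinAt y (Set.Icc t0 T) t1 :=
              hy_cont t1 ht1Icc
            have htend : Filter.Tendsto y (nhdsWithin t1 (Set.Ico t0 t1))
                (nhds (y t1)) :=
              hcont1.tendsto.mono_left (nhdsWithin_mono t1 (fun x hx =>
                ⟨hx.1, hx.2.le.trans ht1Icc.2⟩))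
            have hne : (nhdsWithin t1 (Set.Ico t0 t1)).NeBot := by
              rw [nhdsWithin_Ico_eq_nhdsLT hlt0]
              exact nhdsLT_neBot t1
            refine le_of_tendsto htend ?_
            filter_upwards [self_mem_nhdsWithin] with s hs
            exact (hbelow s hs).le
    -- `y` is antitone on `[t0, t1]`
    have hsub1 : Set.Icc t0 t1 ⊆ Set.Icc t0 T :=
      Set.Icc_subset_Icc le_rfl ht1Icc.2
    have hanti1 : AntitoneOn y (Set.Icc t0 t1) := by
      apply antitoneOn_of_hasDerivWithinAt_ae_nonpos (f' := y')
        (hy_cont.mono hsub1)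
      · intro x hx
        exact (hderiv x (hsub1 hx)).mono hsub1
      · have hmono : volume.restrict (Set.Icc t0 t1) ≤
            volume.restrict (Set.Icc t0 T) :=
          Measure.restrict_mono hsub1 le_rfl
        have h1 : ∀ᵐ x ∂(volume.restrict (Set.Icc t0 t1)),
            y' x + z x * (κ / 2 - y x) ≤ 0 := ae_mono hmono hineq
        have h2 : ∀ᵐ x ∂(volume.restrict (Set.Icc t0 t1)),
            x ∈ Set.Icc t0 t1 := ae_restrict_mem measurableSet_Icc
        filter_upwards [h1, h2] with x hx1 hx2
        have hzx : 0 ≤ z x := hz_nonneg x (hsub1 hx2)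
        have hyx : y x ≤ κ / 2 := hle x hx2
        nlinarith
    have : y t1 ≤ y t0 :=
      hanti1 (Set.left_mem_Icc.mpr ht1Icc.1) (Set.right_mem_Icc.mpr ht1Icc.1)
        ht1Icc.1
    linarith
  -- Step 2: so `y' ≤ 0` a.e. and `y` is antitone on `[t0, T]`.
  have hanti : AntitoneOn y (Set.Icc t0 T) := by
    apply antitoneOn_of_hasDerivWithinAt_ae_nonpos (f' := y') hy_cont hderiv
    have h2 : ∀ᵐ x ∂(volume.restrict (Set.Icc t0 T)),
        x ∈ Set.Icc t0 T := ae_restrict_mem measurableSet_Icc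
    filter_upwards [hineq, h2] with x hx1 hx2
    have hzx : 0 ≤ z x := hz_nonneg x hx2
    have hyx : y x < κ / 2 := hlt x hx2
    nlinarith
  refine ⟨fun t ht => ?_, hanti⟩
  have : y t ≤ y t0 := hanti (Set.left_mem_Icc.mpr hT) ht ht.1
  linarith
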